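/- Let W : ℝ × ℝ → ℝ be twice continuously differentiable with bounded second partial derivatives (in particular |∂²W/∂s∂κ| ≤ M and |∂²W/∂κ²| ≤ M for some M), and let α > 0, h > 0. For β > 0 define v_β(s, t) = W(s, ((t − s)/α − 1)/h) + (β/(2h²))·((t − s)/α − 1)². Then there exists β₀ > 0 such that for every β > β₀ there exists a constant C > 0 with −∂²v_β/∂s∂t(s, t) > C for all s, t ∈ ℝ; i.e., the site energy of the double chain model satisfies the twist condition for β large enough. -/

import Mathlib

open Filter Topology Set

noncomputable section

/-- The site energy of the double chain model,
`v_β(s,t) = W(s, ((t−s)/α − 1)/h) + (β/(2h²))·((t−s)/α − 1)²`,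
satisfies the twist condition `−∂²v_β/∂s∂t > C > 0` for every bending modulus `β` large
enough, provided the inter-chain potential `W` has bounded second partial derivatives. -/
theorem double_chain_twist_condition
    (W : ℝ → ℝ → ℝ)
    (hW : ContDiff ℝ 2 (Function.uncurry W))
    (M : ℝ)
    (hM : ∀ s κ : ℝ,
      |deriv (fun κ' => deriv (fun s' => W s' κ') s) κ| ≤ M ∧
      |deriv (deriv (fun κ' => W s κ')) κ| ≤ M)
    (α h : ℝ) (hα : 0 < α) (hh : 0 < h) :
    ∃ β₀ : ℝ, 0 < β₀ ∧ ∀ β : ℝ, β₀ < β → ∃ C : ℝ, 0 < C ∧ ∀ s t : ℝ,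
      C < -(deriv (fun t' => deriv
          (fun s' => W s' (((t' - s') / α - 1) / h)
            + β / (2 * h ^ 2) * ((t' - s') / α - 1) ^ 2) s) t) := by
  have hαh : (0:ℝ) < α * h := mul_pos hα hh
  set F := Function.uncurry W with hFdef
  have hFd : Differentiable ℝ F := hW.differentiable (by norm_num)
  have hF1 : ContDiff ℝ 1 (fderiv ℝ F) := hW.fderiv_right (by norm_num)
  have hF'd : Differentiable ℝ (fderiv ℝ F) := hF1.differentiable (by norm_num)
  -- chain rule for W along a curve
  have key : ∀ (a b : ℝ → ℝ) (a' b' x : ℝ), HasDerivAt a a' x → HasDerivAt b b' x →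
      HasDerivAt (fun y => W (a y) (b y)) (fderiv ℝ F (a x, b x) (a', b')) x := by
    intro a b a' b' x ha hb
    have h1 : HasDerivAt (fun y => (a y, b y)) (a', b') x := ha.prodMk hb
    exact (hFd (a x, b x)).hasFDerivAt.comp_hasDerivAt x h1
  -- chain rule for the first derivative along a curve in the second variable
  have keyd : ∀ (c : ℝ → ℝ) (c' x : ℝ) (v : ℝ × ℝ) (s' : ℝ), HasDerivAt c c' x →
      HasDerivAt (fun y => fderiv ℝ F (s', c y) v)
        (fderiv ℝ (fderiv ℝ F) (s', c x) (0, c') v) x := by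
    intro c c' x v s' hc
    have h1 : HasDerivAt (fun y => (s', c y)) ((0:ℝ), c') x :=
      (hasDerivAt_const x s').prodMk hc
    have h2 : HasDerivAt (fun y => fderiv ℝ F (s', c y))
        (fderiv ℝ (fderiv ℝ F) (s', c x) (0, c')) x :=
      (hF'd (s', c x)).hasFDerivAt.comp_hasDerivAt x h1
    have h3 := h2.clm_apply (hasDerivAt_const x v)
    simpa using h3
  -- partial derivatives expressed via fderiv
  have l1 : ∀ s κ : ℝ, deriv (fun s' => W s' κ) s = fderiv ℝ F (s, κ) (1, 0) := by
    intro s κ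
    exact (key (fun y => y) (fun _ => κ) 1 0 s (hasDerivAt_id s)
      (hasDerivAt_const s κ)).deriv
  have l2 : ∀ s κ : ℝ, deriv (fun κ' => W s κ') κ = fderiv ℝ F (s, κ) (0, 1) := by
    intro s κ
    exact (key (fun _ => s) (fun y => y) 0 1 κ (hasDerivAt_const κ s)
      (hasDerivAt_id κ)).deriv
  -- second (mixed) partials expressed via second fderiv
  have l3 : ∀ s κ : ℝ, deriv (fun κ' => deriv (fun s' => W s' κ') s) κ
      = fderiv ℝ (fderiv ℝ F) (s, κ) (0, 1) (1, 0) := by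
    intro s κ
    have he : (fun κ' => deriv (fun s' => W s' κ') s)
        = fun κ' => fderiv ℝ F (s, κ') (1, 0) := funext fun κ' => l1 s κ'
    rw [he]
    exact (keyd (fun y => y) 1 κ (1, 0) s (hasDerivAt_id κ)).deriv
  have l4 : ∀ s κ : ℝ, deriv (deriv (fun κ' => W s κ')) κ
      = fderiv ℝ (fderiv ℝ F) (s, κ) (0, 1) (0, 1) := by
    intro s κ
    have he : deriv (fun κ' => W s κ') = fun κ' => fderiv ℝ F (s, κ') (0, 1) :=
      funext fun κ' => l2 s κ'
    rw [he]
    exact (keyd (fun y => y) 1 κ (0, 1) s (hasDerivAt_id κ)).deriv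
  -- M is nonnegative
  have hM0 : 0 ≤ M := le_trans (abs_nonneg _) (hM 0 0).1
  -- choose β₀
  refine ⟨M * (α * h) + M + 1, by positivity, fun β hβ => ?_⟩
  refine ⟨(β - M * (α * h) - M) / (2 * (α * h) ^ 2), by
    have : (0:ℝ) < β - M * (α * h) - M := by linarith
    positivity, fun s t => ?_⟩
  set κ₀ : ℝ := ((t - s) / α - 1) / h with hκ₀
  -- the inner derivative (in s), as a function of t'
  have hinner : ∀ t' : ℝ, deriv
      (fun s' => W s' (((t' - s') / α - 1) / h)
        + β / (2 * h ^ 2) * ((t' - s') / α - 1) ^ 2) s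
      = fderiv ℝ F (s, ((t' - s) / α - 1) / h) (1, -(1 / (α * h)))
        + (-(β / (α * h ^ 2) * ((t' - s) / α - 1))) := by
    intro t'
    have hb : HasDerivAt (fun s' => ((t' - s') / α - 1) / h) (-(1 / (α * h))) s := by
      have h0 : HasDerivAt (fun s' => ((t' - s') / α - 1) / h) (((0 - 1) / α) / h) s :=
        ((((hasDerivAt_const s t').sub (hasDerivAt_id s)).div_const α).sub_const 1).div_const h
      convert h0 using 1
      field_simp
      ring
    have h1 := key (fun y => y) (fun s' => ((t' - s') / α - 1) / h) 1 (-(1 / (α * h))) s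
      (hasDerivAt_id s) hb
    have hq : HasDerivAt (fun s' => β / (2 * h ^ 2) * ((t' - s') / α - 1) ^ 2)
        (-(β / (α * h ^ 2) * ((t' - s) / α - 1))) s := by
      have hg : HasDerivAt (fun s' => (t' - s') / α - 1) ((0 - 1) / α) s :=
        (((hasDerivAt_const s t').sub (hasDerivAt_id s)).div_const α).sub_const 1
      have h2 := (hg.fun_pow 2).const_mul (β / (2 * h ^ 2))
      refine h2.congr_deriv ?_
      norm_num
      field_simp
    exact (h1.add hq).deriv
  -- rewrite the outer function
  have hfe : (fun t' => deriv
      (fun s' => W s' (((t' - s') / α - 1) / h)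
        + β / (2 * h ^ 2) * ((t' - s') / α - 1) ^ 2) s)
      = fun t' => fderiv ℝ F (s, ((t' - s) / α - 1) / h) (1, -(1 / (α * h)))
        + (-(β / (α * h ^ 2) * ((t' - s) / α - 1))) := funext hinner
  -- the outer derivative (in t)
  have hκt : HasDerivAt (fun t' => ((t' - s) / α - 1) / h) (1 / (α * h)) t := by
    have h0 : HasDerivAt (fun t' => ((t' - s) / α - 1) / h) (((1 - 0) / α) / h) t :=
      ((((hasDerivAt_id t).sub (hasDerivAt_const t s)).div_const α).sub_const 1).div_const h
    convert h0 using 1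
    field_simp
    ring
  have hpart1 : HasDerivAt
      (fun t' => fderiv ℝ F (s, ((t' - s) / α - 1) / h) (1, -(1 / (α * h))))
      (fderiv ℝ (fderiv ℝ F) (s, κ₀) (0, 1 / (α * h)) (1, -(1 / (α * h)))) t :=
    keyd (fun t' => ((t' - s) / α - 1) / h) (1 / (α * h)) t (1, -(1 / (α * h))) s hκt
  have hpart2 : HasDerivAt (fun t' => -(β / (α * h ^ 2) * ((t' - s) / α - 1)))
      (-(β / (α ^ 2 * h ^ 2))) t := by
    have hg : HasDerivAt (fun t' => (t' - s) / α - 1) ((1 - 0) / α) t :=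
      (((hasDerivAt_id t).sub (hasDerivAt_const t s)).div_const α).sub_const 1
    have h2 := ((hg.const_mul (β / (α * h ^ 2))).fun_neg)
    refine h2.congr_deriv ?_
    ring
  have hderiv : deriv (fun t' => deriv
      (fun s' => W s' (((t' - s') / α - 1) / h)
        + β / (2 * h ^ 2) * ((t' - s') / α - 1) ^ 2) s) t
      = fderiv ℝ (fderiv ℝ F) (s, κ₀) (0, 1 / (α * h)) (1, -(1 / (α * h)))
        + (-(β / (α ^ 2 * h ^ 2))) := by
    rw [hfe]
    exact (hpart1.add hpart2).deriv
  -- expand the bilinear term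
  set L := fderiv ℝ (fderiv ℝ F) (s, κ₀) with hL
  have hA : |L (0, 1) (1, 0)| ≤ M := by rw [← l3 s κ₀]; exact (hM s κ₀).1
  have hB : |L (0, 1) (0, 1)| ≤ M := by rw [← l4 s κ₀]; exact (hM s κ₀).2
  have hexp : L (0, 1 / (α * h)) (1, -(1 / (α * h)))
      = (1 / (α * h)) * (L (0, 1) (1, 0) + (-(1 / (α * h))) * L (0, 1) (0, 1)) := by
    have e1 : ((0:ℝ), 1 / (α * h)) = (1 / (α * h)) • ((0:ℝ), (1:ℝ)) := by
      simp [Prod.smul_mk]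
    have e2 : ((1:ℝ), -(1 / (α * h))) = ((1:ℝ), (0:ℝ)) + (-(1 / (α * h))) • ((0:ℝ), (1:ℝ)) := by
      simp [Prod.smul_mk]
    rw [e1, e2, map_smul, ContinuousLinearMap.smul_apply, map_add, map_smul]
    simp only [smul_eq_mul]
    try ring
  -- final estimate
  rw [hderiv, hexp]
  have hAle : L (0, 1) (1, 0) ≤ M := (abs_le.mp hA).2
  have hBle : -M ≤ L (0, 1) (0, 1) ∧ L (0, 1) (0, 1) ≤ M := abs_le.mp hB
  have hc : (0:ℝ) < 1 / (α * h) := by positivity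
  have hineq : (1 / (α * h)) * (L (0, 1) (1, 0) + (-(1 / (α * h))) * L (0, 1) (0, 1))
      ≤ (1 / (α * h)) * (M + (1 / (α * h)) * M) := by
    apply mul_le_mul_of_nonneg_left _ (le_of_lt hc)
    have : (-(1 / (α * h))) * L (0, 1) (0, 1) ≤ (1 / (α * h)) * M := by
      have := hBle.1
      nlinarith
    linarith
  have hkey : β / (α ^ 2 * h ^ 2) - (1 / (α * h)) * (M + (1 / (α * h)) * M)
      = (β - M * (α * h) - M) / (α * h) ^ 2 := by
    field_simp
    ring
  have h1 : (β - M * (α * h) - M) / (2 * (α * h) ^ 2)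
      < (β - M * (α * h) - M) / (α * h) ^ 2 := by
    have hpos : (0:ℝ) < β - M * (α * h) - M := by linarith
    have hp2 : (0:ℝ) < (α * h) ^ 2 := by positivity
    exact div_lt_div_of_pos_left hpos hp2 (by linarith)
  linarith [hineq, h1, hkey]
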